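/- Assume η ≥ 2 and (δT,δX) ∈ ℤ×ℕ with δ := δT+η·δX ≥ 0. Set A := δX if δT ≥ 0 and A := δ/η if δT < 0; m := min(⌊A⌋, q−1); h := min(δT,q)+1 if δT ≥ 0 and q ≤ δX, and h := 0 otherwise; s := (δ−q)/η (a rational number); and s̃ := ⌊s⌋ if 0 ≤ s ≤ m, s̃ := −1 if s < 0, s̃ := m if s > m. Then dim C_η(δT,δX) = (q+1)(s̃+1) + (m−s̃)(δ+1) − η·(m(m+1) − s̃(s̃+1))/2 + h. -/

import Mathlib

open MvPolynomial

attribute [local instance] Classical.propDecidable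

namespace Hirz

/-- Index type for the `(q+1)²` rational points of the Hirzebruch surface. -/
abbrev HIdx (F : Type) := (F × F) ⊕ F ⊕ F ⊕ Unit

variable (F : Type) [Field F] [Fintype F]

/-- The homogeneous coordinates of the rational points of `H_η`. -/
def pt : HIdx F → Fin 4 → F
  | Sum.inl (a, b) => ![1, a, 1, b]
  | Sum.inr (Sum.inl b) => ![0, 1, 1, b]
  | Sum.inr (Sum.inr (Sum.inl a)) => ![1, a, 0, 1]
  | Sum.inr (Sum.inr (Sum.inr _)) => ![0, 1, 0, 1]

/-- Evaluation of a polynomial at all the rational points. -/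
noncomputable def ev (P : MvPolynomial (Fin 4) F) : HIdx F → F :=
  fun i => eval (pt F i) P

/-- `c` is the exponent vector (T1,T2,X1,X2) of a monomial of bidegree `(δT, δX)`. -/
def IsBideg (η : ℕ) (δT : ℤ) (δX : ℕ) (c : Fin 4 → ℕ) : Prop :=
  (c 0 : ℤ) + (c 1 : ℤ) - (η : ℤ) * (c 2 : ℤ) = δT ∧ c 2 + c 3 = δX

/-- The monomial with exponent vector `c`. -/
noncomputable def mon (c : Fin 4 → ℕ) : MvPolynomial (Fin 4) F :=
  monomial (Finsupp.equivFunOnFinite.symm c) (1 : F)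

/-- The set of monomials of bidegree `(δT, δX)`. -/
def MSet (η : ℕ) (δT : ℤ) (δX : ℕ) : Set (MvPolynomial (Fin 4) F) :=
  {P | ∃ c : Fin 4 → ℕ, IsBideg η δT δX c ∧ P = mon F c}

/-- `R(δT,δX)`, the space of homogeneous polynomials of bidegree `(δT,δX)`. -/
noncomputable def RSpan (η : ℕ) (δT : ℤ) (δX : ℕ) : Submodule F (MvPolynomial (Fin 4) F) :=
  Submodule.span F (MSet F η δT δX)

/-- The code `C_η(δT,δX)`, image of `R(δT,δX)` under evaluation. -/
noncomputable def Code (η : ℕ) (δT : ℤ) (δX : ℕ) : Submodule F (HIdx F → F) :=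
  Submodule.span F (ev F '' MSet F η δT δX)

/-- Hamming weight. -/
noncomputable def wt (v : HIdx F → F) : ℕ := {i | v i ≠ 0}.ncard

/-- Minimum distance of `C_η(δT,δX)`. -/
noncomputable def dmin (η : ℕ) (δT : ℤ) (δX : ℕ) : ℕ :=
  sInf {w : ℕ | ∃ v ∈ Code F η δT δX, v ≠ 0 ∧ wt F v = w}

/-- `⌊A⌋` where `A = δX` if `δT ≥ 0` and `A = δ/η` otherwise. -/
def Afloor (η : ℕ) (δT : ℤ) (δX : ℕ) : ℤ :=
  if 0 ≤ δT then (δX : ℤ) else (δT + (η : ℤ) * (δX : ℤ)) / (η : ℤ)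

/-- Exponent vector of the monomial `M(d2,c2)`. -/
def Mexp (η : ℕ) (δT : ℤ) (δX : ℕ) (d2 c2 : ℕ) : Fin 4 → ℕ :=
  ![(δT + (η : ℤ) * ((δX : ℤ) - (d2 : ℤ)) - (c2 : ℤ)).toNat, c2, δX - d2, d2]

/-- The monomial `M(d2,c2) = T1^(δT+η(δX-d2)-c2) T2^c2 X1^(δX-d2) X2^d2`. -/
noncomputable def Mmon (η : ℕ) (δT : ℤ) (δX : ℕ) (d2 c2 : ℕ) : MvPolynomial (Fin 4) F :=
  mon F (Mexp η δT δX d2 c2)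

/-- The lattice polygon `P(δT,δX)`. -/
def PSet (η : ℕ) (δT : ℤ) (δX : ℕ) : Set (ℕ × ℕ) :=
  {p | (p.1 : ℤ) ≤ Afloor η δT δX ∧ (p.2 : ℤ) ≤ δT + (η : ℤ) * ((δX : ℤ) - (p.1 : ℤ))}

/-- The set `A_X = {α : α ≤ min(⌊A⌋, q-1)} ∪ ({A} ∩ ℕ)`. -/
def AX (η : ℕ) (δT : ℤ) (δX : ℕ) (q : ℕ) : Set ℕ :=
  {α | (α : ℤ) ≤ min (Afloor η δT δX) ((q : ℤ) - 1)} ∪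
    {α | if 0 ≤ δT then (α : ℤ) = (δX : ℤ)
         else (α : ℤ) * (η : ℤ) = δT + (η : ℤ) * (δX : ℤ)}

/-- The set of representatives `K(δT,δX)`. -/
def KSet (η : ℕ) (δT : ℤ) (δX : ℕ) (q : ℕ) : Set (ℕ × ℕ) :=
  {p | p.1 ∈ AX η δT δX q ∧
    ((p.2 : ℤ) ≤ min (δT + (η : ℤ) * (δX : ℤ) - (η : ℤ) * (p.1 : ℤ)) (q : ℤ) - 1 ∨
      (p.2 : ℤ) = δT + (η : ℤ) * (δX : ℤ) - (η : ℤ) * (p.1 : ℤ))}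

/-- Condition (H): `η ≥ 2`, `δT < 0`, `η ∣ δT` and `q ≤ δX + δT/η`. -/
def CondH (η : ℕ) (δT : ℤ) (δX : ℕ) (q : ℕ) : Prop :=
  2 ≤ η ∧ δT < 0 ∧ (η : ℤ) ∣ δT ∧ (q : ℤ) ≤ (δX : ℤ) + δT / (η : ℤ)

/-- `K*(δT,δX)`: `K(δT,δX)` minus `(δ/η, 0)` if (H) holds. -/
def KStar (η : ℕ) (δT : ℤ) (δX : ℕ) (q : ℕ) : Set (ℕ × ℕ) :=
  if CondH η δT δX q then
    KSet η δT δX q \ {(((δT + (η : ℤ) * (δX : ℤ)) / (η : ℤ)).toNat, 0)}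
  else KSet η δT δX q

/-- `Δ*(δT,δX) = {M(α,β) : (α,β) ∈ K*(δT,δX)}`. -/
noncomputable def DeltaStar (η : ℕ) (δT : ℤ) (δX : ℕ) (q : ℕ) :
    Set (MvPolynomial (Fin 4) F) :=
  {P | ∃ p ∈ KStar η δT δX q, P = Mmon F η δT δX p.1 p.2}

set_option linter.unusedSectionVars false
set_option maxHeartbeats 1000000

section Aux1
variable {F : Type} [Field F] [Fintype F]
local notation "q" => Fintype.card F


lemma q_pos : 0 < q := Fintype.card_pos
lemma one_lt_q : 1 < q := Fintype.one_lt_card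

lemma pow_key (x : F) (n k : ℕ) (hn : 1 ≤ n) : x ^ (n + k * (q - 1)) = x ^ n := by
  have hq := one_lt_q (F := F)
  induction k with
  | zero => simp
  | succ k ih =>
    have : n + (k+1) * (q-1) = (n + k*(q-1)) + (q-1) := by ring
    rw [this, pow_add]
    rcases eq_or_ne x 0 with rfl | hx
    · rw [zero_pow (by omega : n + k*(q-1) ≠ 0), zero_pow (by omega : n ≠ 0), zero_mul]
    · rw [FiniteField.pow_card_sub_one_eq_one x hx, mul_one, ih]

lemma pow_red (x : F) (n : ℕ) (h : q ≤ n) : x ^ n = x ^ (n - (q - 1)) := by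
  have hq := one_lt_q (F := F)
  have h1 : 1 ≤ n - (q-1) := by omega
  have h2 : n = (n - (q-1)) + 1 * (q-1) := by omega
  calc x ^ n = x ^ ((n - (q-1)) + 1 * (q-1)) := by rw [← h2]
    _ = x ^ (n - (q-1)) := pow_key x _ 1 h1

/-- Univariate independence of monomial functions of exponent `< q`. -/
lemma uni_ind (S : Finset ℕ) (c : ℕ → F) (hS : ∀ n ∈ S, n < q)
    (h : ∀ x : F, ∑ n ∈ S, c n * x ^ n = 0) : ∀ n ∈ S, c n = 0 := by
  classical
  have hq := one_lt_q (F := F)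
  set P : Polynomial F := ∑ n ∈ S, Polynomial.C (c n) * Polynomial.X ^ n with hP
  have hdeg : P.natDegree < q := by
    rcases Finset.eq_empty_or_nonempty S with rfl | hne
    · simpa [hP] using q_pos
    have : P.natDegree ≤ q - 1 := by
      apply Polynomial.natDegree_sum_le_of_forall_le
      intro n hn
      exact (Polynomial.natDegree_C_mul_le _ _).trans
        (by simpa using Nat.le_sub_one_of_lt (hS n hn))
    omega
  have heval : ∀ x : F, P.eval x = 0 := by
    intro x
    simpa [hP, Polynomial.eval_finset_sum] using h x
  have hP0 : P = 0 := Polynomial.eq_zero_of_natDegree_lt_card_of_eval_eq_zero P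
    Function.injective_id (fun x => heval x) (by simpa using hdeg)
  intro n hn
  have := congrArg (Polynomial.coeff · n) hP0
  simp only [hP, Polynomial.finset_sum_coeff, Polynomial.coeff_C_mul,
    Polynomial.coeff_X_pow, Polynomial.coeff_zero] at this
  rwa [Finset.sum_eq_single n (fun m _ hm => by rw [if_neg (Ne.symm hm), mul_zero])
    (fun hns => absurd hn hns), if_pos rfl, mul_one] at this

/-- Bivariate independence of monomial functions with exponents `< q`. -/
lemma bi_ind (c : ℕ → ℕ → F)
    (h : ∀ a b : F, ∑ β ∈ Finset.range q, ∑ α ∈ Finset.range q, c α β * a ^ β * b ^ α = 0) :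
    ∀ α β, α < q → β < q → c α β = 0 := by
  intro α β hα hβ
  have h1 : ∀ b : F, ∀ β' ∈ Finset.range q, ∑ α' ∈ Finset.range q, c α' β' * b ^ α' = 0 := by
    intro b
    apply uni_ind _ (fun β' => ∑ α' ∈ Finset.range q, c α' β' * b ^ α') (by simp)
    intro a
    have := h a b
    rw [← this]
    apply Finset.sum_congr rfl
    intro β' _
    rw [Finset.sum_mul]
    apply Finset.sum_congr rfl
    intro α' _
    ring
  have h2 := uni_ind (Finset.range q) (fun α' => c α' β) (by simp)
    (fun b => h1 b β (Finset.mem_range.mpr hβ)) α (Finset.mem_range.mpr hα)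
  simpa using h2

end Aux1

section Aux2
variable (F : Type) [Field F] [Fintype F]

/-- The model vector for exponents `(α,β) = (d2, c2)`. -/
noncomputable def W (η : ℕ) (δT : ℤ) (δX : ℕ) (α β : ℕ) : HIdx F → F
  | Sum.inl (a, b) => a ^ β * b ^ α
  | Sum.inr (Sum.inl b) =>
      (if (β:ℤ) = δT + (η:ℤ)*(δX:ℤ) - (η:ℤ)*(α:ℤ) then 1 else 0) * b ^ α
  | Sum.inr (Sum.inr (Sum.inl a)) => a ^ β * (if α = δX then 1 else 0)
  | Sum.inr (Sum.inr (Sum.inr _)) =>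
      (if (β:ℤ) = δT + (η:ℤ)*(δX:ℤ) - (η:ℤ)*(α:ℤ) then 1 else 0) *
        (if α = δX then 1 else 0)

variable {F}

lemma ev_mon_apply (c : Fin 4 → ℕ) (i : HIdx F) :
    ev F (mon F c) i = ∏ j : Fin 4, (pt F i j) ^ (c j) := by
  rw [ev, mon, eval_monomial, one_mul]
  rw [Finsupp.prod_fintype _ _ (fun j => pow_zero _)]
  simp

/-- Feasibility of an exponent pair. -/
def Feas (η : ℕ) (δT : ℤ) (δX : ℕ) (α β : ℕ) : Prop :=
  α ≤ δX ∧ (β:ℤ) ≤ δT + (η:ℤ)*(δX:ℤ) - (η:ℤ)*(α:ℤ)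

lemma bideg_key {η : ℕ} {δT : ℤ} {δX : ℕ} {c : Fin 4 → ℕ} (hb : IsBideg η δT δX c) :
    δT + (η:ℤ)*(δX:ℤ) - (η:ℤ)*(c 3:ℤ) = (c 0 : ℤ) + (c 1:ℤ) := by
  have h2 : (c 2 : ℤ) + (c 3:ℤ) = (δX:ℤ) := by exact_mod_cast congrArg (Nat.cast : ℕ → ℤ) hb.2
  linear_combination -hb.1 - (η:ℤ) * h2

lemma ev_mon_eq_W {η : ℕ} {δT : ℤ} {δX : ℕ} {c : Fin 4 → ℕ} (hb : IsBideg η δT δX c) :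
    ev F (mon F c) = W F η δT δX (c 3) (c 1) := by
  have key := bideg_key hb
  have h2 := hb.2
  have hc0 : c 0 = 0 ↔ (c 1:ℤ) = δT + (η:ℤ)*(δX:ℤ) - (η:ℤ)*(c 3:ℤ) := by
    rw [key]
    constructor
    · intro h; rw [h]; simp
    · intro h; omega
  have hc2 : c 2 = 0 ↔ c 3 = δX := by omega
  funext i
  rw [ev_mon_apply, Fin.prod_univ_four]
  rcases i with ⟨a, b⟩ | b | a | u
  · simp [pt, W]
  · simp only [pt, W, Matrix.cons_val_zero, Matrix.cons_val_one, Matrix.head_cons,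
      Matrix.cons_val_two, Matrix.tail_cons, Matrix.cons_val_three]
    rw [zero_pow_eq, one_pow, one_pow]
    rcases eq_or_ne (c 0) 0 with h | h
    · rw [if_pos h, if_pos (hc0.mp h)]; ring
    · rw [if_neg h, if_neg (fun hh => h (hc0.mpr hh))]; ring
  · simp only [pt, W, Matrix.cons_val_zero, Matrix.cons_val_one, Matrix.head_cons,
      Matrix.cons_val_two, Matrix.tail_cons, Matrix.cons_val_three]
    rw [zero_pow_eq, one_pow, one_pow]
    rcases eq_or_ne (c 2) 0 with h | h
    · rw [if_pos h, if_pos (hc2.mp h), mul_one, mul_one]; ring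
    · rw [if_neg h, if_neg (fun hh => h (hc2.mpr hh)), mul_zero, mul_zero]; ring
  · simp only [pt, W, Matrix.cons_val_zero, Matrix.cons_val_one, Matrix.head_cons,
      Matrix.cons_val_two, Matrix.tail_cons, Matrix.cons_val_three]
    rw [zero_pow_eq, zero_pow_eq, one_pow, one_pow]
    rcases eq_or_ne (c 0) 0 with h | h <;> rcases eq_or_ne (c 2) 0 with h' | h'
    · rw [if_pos h, if_pos h', if_pos (hc0.mp h), if_pos (hc2.mp h')]; ring
    · rw [if_pos h, if_neg h', if_pos (hc0.mp h), if_neg (fun hh => h' (hc2.mpr hh))]; ring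
    · rw [if_neg h, if_pos h', if_neg (fun hh => h (hc0.mpr hh))]; ring
    · rw [if_neg h, if_neg h', if_neg (fun hh => h (hc0.mpr hh))]; ring

lemma bideg_feas {η : ℕ} {δT : ℤ} {δX : ℕ} {c : Fin 4 → ℕ} (hb : IsBideg η δT δX c) :
    Feas η δT δX (c 3) (c 1) := by
  have key := bideg_key hb
  have h2 := hb.2
  constructor
  · omega
  · have : (0:ℤ) ≤ (c 0 : ℤ) := Int.ofNat_nonneg _
    omega

lemma Mexp_bideg {η : ℕ} {δT : ℤ} {δX : ℕ} {α β : ℕ} (h : Feas η δT δX α β) :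
    IsBideg η δT δX (Mexp η δT δX α β) ∧
      (Mexp η δT δX α β) 3 = α ∧ (Mexp η δT δX α β) 1 = β := by
  obtain ⟨h1, h2⟩ := h
  have hδXα : ((δX - α : ℕ) : ℤ) = (δX:ℤ) - (α:ℤ) := by omega
  have hge : 0 ≤ δT + (η:ℤ) * ((δX:ℤ) - (α:ℤ)) - (β:ℤ) := by
    have : (η:ℤ) * ((δX:ℤ) - (α:ℤ)) = (η:ℤ)*(δX:ℤ) - (η:ℤ)*(α:ℤ) := by ring
    omega
  refine ⟨⟨?_, ?_⟩, rfl, rfl⟩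
  · show ((Mexp η δT δX α β 0 : ℕ) : ℤ) + _ - _ = _
    simp only [Mexp, Matrix.cons_val_zero, Matrix.cons_val_one, Matrix.head_cons,
      Matrix.cons_val_two, Matrix.tail_cons]
    rw [Int.toNat_of_nonneg hge, hδXα]
    ring
  · show (δX - α) + α = δX
    omega

lemma ev_image_eq {η : ℕ} {δT : ℤ} {δX : ℕ} :
    ev F '' MSet F η δT δX = {v | ∃ α β, Feas η δT δX α β ∧ v = W F η δT δX α β} := by
  ext v
  constructor
  · rintro ⟨P, ⟨c, hb, rfl⟩, rfl⟩
    exact ⟨c 3, c 1, bideg_feas hb, ev_mon_eq_W hb⟩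
  · rintro ⟨α, β, hf, rfl⟩
    obtain ⟨hb, h3, h1⟩ := Mexp_bideg hf
    refine ⟨mon F (Mexp η δT δX α β), ⟨_, hb, rfl⟩, ?_⟩
    rw [ev_mon_eq_W hb, h3, h1]

end Aux2


def topZ (η : ℕ) (δT : ℤ) (δX : ℕ) (α : ℕ) : ℤ :=
  δT + (η:ℤ)*(δX:ℤ) - (η:ℤ)*(α:ℤ)
def topN (η : ℕ) (δT : ℤ) (δX : ℕ) (α : ℕ) : ℕ := (topZ η δT δX α).toNat
def mN (η : ℕ) (δT : ℤ) (δX : ℕ) (q : ℕ) : ℕ := (min (Afloor η δT δX) ((q:ℤ)-1)).toNat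
def rowK (η : ℕ) (δT : ℤ) (δX : ℕ) (q : ℕ) (α : ℕ) : Finset ℕ :=
  Finset.range (min (topN η δT δX α) q) ∪ {topN η δT δX α}
def KF1 (η : ℕ) (δT : ℤ) (δX : ℕ) (q : ℕ) : Finset (ℕ×ℕ) :=
  (Finset.range (mN η δT δX q + 1)).biUnion (fun α => {α} ×ˢ rowK η δT δX q α)
def KF2 (η : ℕ) (δT : ℤ) (δX : ℕ) (q : ℕ) : Finset (ℕ×ℕ) :=
  if 0 ≤ δT ∧ q ≤ δX then {δX} ×ˢ rowK η δT δX q δX else ∅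
def KF (η : ℕ) (δT : ℤ) (δX : ℕ) (q : ℕ) : Finset (ℕ×ℕ) :=
  KF1 η δT δX q ∪ KF2 η δT δX q

section Comb
variable {η : ℕ} {δT : ℤ} {δX : ℕ} {q : ℕ}
variable (hη : 2 ≤ η) (hδ : 0 ≤ δT + (η:ℤ)*(δX:ℤ)) (hq : 2 ≤ q)

include hη hδ in
lemma Afloor_nonneg : 0 ≤ Afloor η δT δX := by
  by_cases h : 0 ≤ δT
  · simp [Afloor, h]
  · simp only [Afloor, if_neg h]
    exact Int.ediv_nonneg hδ (by positivity)

include hη in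
lemma Afloor_le_δX : Afloor η δT δX ≤ (δX:ℤ) := by
  by_cases h : 0 ≤ δT
  · simp [Afloor, h]
  · simp only [Afloor, if_neg h]
    have hηpos : (0:ℤ) < (η:ℤ) := by positivity
    calc (δT + (η:ℤ)*(δX:ℤ)) / (η:ℤ) ≤ ((η:ℤ)*(δX:ℤ)) / (η:ℤ) :=
          Int.ediv_le_ediv hηpos (by omega)
      _ = (δX:ℤ) := Int.mul_ediv_cancel_left _ (by omega)

include hη in
lemma Afloor_lt_δX_of_neg (h : ¬ 0 ≤ δT) : Afloor η δT δX < (δX:ℤ) := by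
  simp only [Afloor, if_neg h]
  have hηpos : (0:ℤ) < (η:ℤ) := by positivity
  rw [Int.ediv_lt_iff_lt_mul hηpos]
  nlinarith

include hη hδ hq in
lemma mN_cast : (mN η δT δX q : ℤ) = min (Afloor η δT δX) ((q:ℤ)-1) := by
  rw [mN, Int.toNat_of_nonneg]
  exact le_min (Afloor_nonneg hη hδ) (by omega)

include hη hδ hq in
lemma mN_le : mN η δT δX q ≤ q - 1 := by
  have h := mN_cast hη hδ hq
  omega

include hη hδ in
lemma eta_mul_Afloor_le : (η:ℤ) * Afloor η δT δX ≤ δT + (η:ℤ)*(δX:ℤ) := by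
  by_cases h : 0 ≤ δT
  · simp only [Afloor, if_pos h]; omega
  · simp only [Afloor, if_neg h]
    have := Int.ediv_mul_le (δT + (η:ℤ)*(δX:ℤ)) (b := (η:ℤ)) (by positivity)
    linarith [this]

include hη hδ in
lemma topZ_nonneg {α : ℕ} (hα : (α:ℤ) ≤ Afloor η δT δX) : 0 ≤ topZ η δT δX α := by
  have h1 := eta_mul_Afloor_le hη hδ
  have h2 : (η:ℤ) * (α:ℤ) ≤ (η:ℤ) * Afloor η δT δX :=
    mul_le_mul_of_nonneg_left hα (by positivity)
  rw [topZ]; linarith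

include hη hδ in
lemma topN_cast {α : ℕ} (hα : (α:ℤ) ≤ Afloor η δT δX) :
    (topN η δT δX α : ℤ) = topZ η δT δX α :=
  Int.toNat_of_nonneg (topZ_nonneg hη hδ hα)

lemma mem_rowK {α β : ℕ} :
    β ∈ rowK η δT δX q α ↔ (β < min (topN η δT δX α) q ∨ β = topN η δT δX α) := by
  simp [rowK]
  tauto

lemma topN_mem_rowK {α : ℕ} : topN η δT δX α ∈ rowK η δT δX q α := by
  simp [rowK]

lemma rowK_card {α : ℕ} : (rowK η δT δX q α).card = min (topN η δT δX α) q + 1 := by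
  rw [rowK, Finset.card_union_of_disjoint, Finset.card_range, Finset.card_singleton]
  rw [Finset.disjoint_singleton_right, Finset.mem_range]
  omega

lemma mem_KF1 {p : ℕ × ℕ} :
    p ∈ KF1 η δT δX q ↔ p.1 ≤ mN η δT δX q ∧ p.2 ∈ rowK η δT δX q p.1 := by
  rcases p with ⟨α, β⟩
  simp only [KF1, Finset.mem_biUnion, Finset.mem_range, Nat.lt_succ_iff,
    Finset.mem_product, Finset.mem_singleton]
  constructor
  · rintro ⟨α', hα', rfl, h⟩; exact ⟨hα', h⟩
  · rintro ⟨h1, h2⟩; exact ⟨α, h1, rfl, h2⟩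

lemma mem_KF2 {p : ℕ × ℕ} :
    p ∈ KF2 η δT δX q ↔ 0 ≤ δT ∧ q ≤ δX ∧ p.1 = δX ∧ p.2 ∈ rowK η δT δX q δX := by
  rcases p with ⟨α, β⟩
  by_cases h : 0 ≤ δT ∧ q ≤ δX
  · simp only [KF2, if_pos h, Finset.mem_product, Finset.mem_singleton]
    tauto
  · simp only [KF2, if_neg h, Finset.notMem_empty, false_iff]
    tauto

lemma mem_KF {p : ℕ × ℕ} :
    p ∈ KF η δT δX q ↔ ((p.1 ≤ mN η δT δX q ∧ p.2 ∈ rowK η δT δX q p.1) ∨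
      (0 ≤ δT ∧ q ≤ δX ∧ p.1 = δX ∧ p.2 ∈ rowK η δT δX q δX)) := by
  rw [KF, Finset.mem_union, mem_KF1, mem_KF2]

include hη hδ hq in
lemma KF_feas {p : ℕ × ℕ} (hp : p ∈ KF η δT δX q) : Feas η δT δX p.1 p.2 := by
  have hAX := Afloor_le_δX (δT := δT) (δX := δX) hη
  rcases p with ⟨α, β⟩
  rw [mem_KF] at hp
  simp only at hp ⊢
  rcases hp with ⟨h1, h2⟩ | ⟨h0, hqx, h1, h2⟩
  · have hαA : (α:ℤ) ≤ Afloor η δT δX := by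
      have := mN_cast hη hδ hq; omega
    have htop := topN_cast hη hδ hαA
    rw [mem_rowK] at h2
    refine ⟨by omega, ?_⟩
    have : (β:ℤ) ≤ (topN η δT δX α : ℤ) := by omega
    rw [htop, topZ] at this; exact this
  · have hαA : ((δX:ℕ):ℤ) ≤ Afloor η δT δX := by simp [Afloor, h0]
    have htop := topN_cast hη hδ hαA
    rw [mem_rowK] at h2
    refine ⟨le_of_eq h1, ?_⟩
    rw [h1]
    have : (β:ℤ) ≤ (topN η δT δX δX : ℤ) := by omega
    rw [htop, topZ] at this; exact this

include hη hδ hq in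
lemma KF_fst_le_Afloor {p : ℕ × ℕ} (hp : p ∈ KF η δT δX q) :
    (p.1:ℤ) ≤ Afloor η δT δX := by
  rw [mem_KF] at hp
  have := mN_cast hη hδ hq
  rcases hp with ⟨h1, _⟩ | ⟨h0, _, h1, _⟩
  · omega
  · rw [h1]; simp [Afloor, h0]

include hη hδ hq in
lemma KF_fst_δX {p : ℕ × ℕ} (hp : p ∈ KF η δT δX q) (h1 : p.1 = δX) :
    0 ≤ δT ∧ p.2 ∈ rowK η δT δX q δX := by
  rw [mem_KF] at hp
  rcases hp with ⟨hm, h2⟩ | ⟨h0, _, _, h2⟩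
  · by_cases h0 : 0 ≤ δT
    · exact ⟨h0, h1 ▸ h2⟩
    · exfalso
      have := Afloor_lt_δX_of_neg (δT := δT) (δX := δX) hη h0
      have := mN_cast hη hδ hq
      omega
  · exact ⟨h0, h2⟩

include hη hδ hq in
lemma KF_card : (KF η δT δX q).card =
    (∑ α ∈ Finset.range (mN η δT δX q + 1), (min (topN η δT δX α) q + 1)) +
      (if 0 ≤ δT ∧ q ≤ δX then min (topN η δT δX δX) q + 1 else 0) := by
  have hd : Disjoint (KF1 η δT δX q) (KF2 η δT δX q) := by
    rw [Finset.disjoint_left]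
    intro p hp1 hp2
    rw [mem_KF1] at hp1
    rw [mem_KF2] at hp2
    have := mN_le hη hδ hq
    omega
  rw [KF, Finset.card_union_of_disjoint hd, KF1, Finset.card_biUnion]
  · congr 1
    · apply Finset.sum_congr rfl
      intro α _
      rw [Finset.card_product, Finset.card_singleton, one_mul, rowK_card]
    · by_cases h : 0 ≤ δT ∧ q ≤ δX
      · rw [KF2, if_pos h, if_pos h, Finset.card_product, Finset.card_singleton, one_mul,
          rowK_card]
      · rw [KF2, if_neg h, if_neg h, Finset.card_empty]
  · intro x _ y _ hxy
    rw [Function.onFun, Finset.disjoint_left]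
    intro p hp1 hp2
    simp only [Finset.mem_product, Finset.mem_singleton] at hp1 hp2
    exact hxy (hp1.1 ▸ hp2.1.symm ▸ rfl)

end Comb

section Span
variable {F : Type} [Field F] [Fintype F]
variable {η : ℕ} {δT : ℤ} {δX : ℕ}
local notation "q" => Fintype.card F

lemma W_congr {α β α' β' : ℕ}
    (hb : ∀ x : F, x ^ β = x ^ β') (ha : ∀ x : F, x ^ α = x ^ α')
    (hf1 : ((β:ℤ) = topZ η δT δX α) ↔ ((β':ℤ) = topZ η δT δX α'))
    (hf2 : (α = δX) ↔ (α' = δX)) :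
    W F η δT δX α β = W F η δT δX α' β' := by
  simp only [topZ] at hf1
  funext i
  rcases i with ⟨a, b⟩ | b | a | u
  · simp only [W]; rw [hb a, ha b]
  · simp only [W]; rw [ha b, if_congr hf1 rfl rfl]
  · simp only [W]; rw [hb a, if_congr hf2 rfl rfl]
  · simp only [W]; rw [if_congr hf1 rfl rfl, if_congr hf2 rfl rfl]

lemma span_feas (hη : 2 ≤ η) (hδ : 0 ≤ δT + (η:ℤ)*(δX:ℤ)) :
    ∀ α β : ℕ, Feas η δT δX α β →
      W F η δT δX α β ∈ Submodule.span F
        ((fun p : ℕ × ℕ => W F η δT δX p.1 p.2) '' ↑(KF η δT δX q)) := by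
  have hq : 2 ≤ q := one_lt_q
  have hKmem : ∀ p : ℕ × ℕ, p ∈ KF η δT δX q →
      W F η δT δX p.1 p.2 ∈ Submodule.span F
        ((fun p : ℕ × ℕ => W F η δT δX p.1 p.2) '' ↑(KF η δT δX q)) := by
    intro p hp
    exact Submodule.subset_span ⟨p, by simpa using hp, rfl⟩
  intro α
  induction α using Nat.strong_induction_on with
  | _ α ihα =>
  intro β
  induction β using Nat.strong_induction_on with
  | _ β ihβ =>
  intro hfeas
  obtain ⟨hαδX, hβtop⟩ := hfeas
  have hβtop' : (β:ℤ) ≤ topZ η δT δX α := hβtop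
  have htopnn : 0 ≤ topZ η δT δX α := le_trans (Int.ofNat_nonneg β) hβtop'
  have htopcast : (topN η δT δX α : ℤ) = topZ η δT δX α := Int.toNat_of_nonneg htopnn
  have hβleN : β ≤ topN η δT δX α := by
    have : (β:ℤ) ≤ (topN η δT δX α : ℤ) := by rw [htopcast]; exact hβtop'
    exact_mod_cast this
  by_cases hred : q ≤ β ∧ β ≠ topN η δT δX α
  · -- reduce β within the same column
    obtain ⟨hqβ, hβne⟩ := hred
    have hβlt : β < topN η δT δX α := lt_of_le_of_ne hβleN hβne
    have heq : W F η δT δX α β = W F η δT δX α (β - (q - 1)) := by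
      apply W_congr (fun x => pow_red x β hqβ) (fun x => rfl) ?_ Iff.rfl
      apply iff_of_false
      · rw [← htopcast]; exact_mod_cast fun h => hβne (by exact_mod_cast h)
      · rw [← htopcast]
        intro h
        have : β - (q-1) = topN η δT δX α := by exact_mod_cast h
        omega
    rw [heq]
    refine ihβ (β - (q-1)) (by omega) ⟨hαδX, ?_⟩
    have h1 : ((β - (q-1) : ℕ):ℤ) ≤ (β:ℤ) := by
      have : β - (q-1) ≤ β := Nat.sub_le _ _
      exact_mod_cast this
    exact le_trans h1 hβtop'
  · push_neg at hred
    by_cases hαm : α ≤ mN η δT δX q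
    · -- directly in KF (part 1)
      apply hKmem (α, β)
      rw [mem_KF]
      dsimp only
      left
      refine ⟨hαm, ?_⟩
      rw [mem_rowK]
      by_cases hβt : β = topN η δT δX α
      · right; exact hβt
      · left
        have hβq : β < q := by
          by_contra h
          exact hβt (hred (le_of_not_gt h))
        have : β < topN η δT δX α := lt_of_le_of_ne hβleN hβt
        omega
    · -- α is too big
      have hηα : (η:ℤ) * (α:ℤ) ≤ δT + (η:ℤ)*(δX:ℤ) := by
        have h0 : (0:ℤ) ≤ (β:ℤ) := Int.ofNat_nonneg β
        rw [topZ] at hβtop'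
        linarith
      have hAfl : (α:ℤ) ≤ Afloor η δT δX := by
        by_cases h0 : 0 ≤ δT
        · simp only [Afloor, if_pos h0]; exact_mod_cast hαδX
        · simp only [Afloor, if_neg h0]
          rw [Int.le_ediv_iff_mul_le (by positivity : (0:ℤ) < (η:ℤ))]
          linarith
      have hαq : q ≤ α := by
        have hmc := mN_cast hη hδ hq
        have : (mN η δT δX q : ℤ) < (α:ℤ) := by exact_mod_cast Nat.lt_of_not_le hαm
        omega
      by_cases hK2 : 0 ≤ δT ∧ α = δX
      · -- in KF (part 2)
        apply hKmem (α, β)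
        rw [mem_KF]
        dsimp only
        right
        refine ⟨hK2.1, by omega, hK2.2, ?_⟩
        rw [mem_rowK]
        have hre : topN η δT δX δX = topN η δT δX α := by rw [hK2.2]
        rw [hre]
        by_cases hβt : β = topN η δT δX α
        · right; exact hβt
        · left
          have hβq : β < q := by
            by_contra h
            exact hβt (hred (le_of_not_gt h))
          have : β < topN η δT δX α := lt_of_le_of_ne hβleN hβt
          omega
      · -- α not equal to δX : reduce α
        have hαδX' : α < δX := by
          by_cases h0 : 0 ≤ δT
          · exact lt_of_le_of_ne hαδX (fun h => hK2 ⟨h0, h⟩)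
          · have h1 := Afloor_lt_δX_of_neg (δT := δT) (δX := δX) hη h0
            have : (α:ℤ) < (δX:ℤ) := lt_of_le_of_lt hAfl h1
            exact_mod_cast this
        set α' := α - (q - 1) with hα'def
        have hα'lt : α' < α := by omega
        have hα'pos : 1 ≤ α' := by omega
        have hα'δX : α' < δX := lt_trans (by omega) hαδX'
        have hα'cast : ((α':ℕ):ℤ) = (α:ℤ) - ((q:ℤ) - 1) := by omega
        have hstep : topZ η δT δX α' = topZ η δT δX α + (η:ℤ)*((q:ℤ)-1) := by
          simp only [topZ]
          rw [hα'cast]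
          ring
        have hbpow : ∀ x : F, x ^ α = x ^ α' := fun x => pow_red x α hαq
        have hmul : 2*((q:ℤ)-1) ≤ (η:ℤ)*((q:ℤ)-1) :=
          mul_le_mul_of_nonneg_right (by exact_mod_cast hη) (by omega)
        by_cases hβt : β = topN η δT δX α
        · by_cases ht0 : topN η δT δX α = 0
          · -- combination case : β = topN α = 0, topZ α = 0
            have hT0 : topZ η δT δX α = 0 := by rw [← htopcast, ht0]; rfl
            have hβ0 : β = 0 := by omega
            have hT' : topZ η δT δX α' = (η:ℤ)*((q:ℤ)-1) := by rw [hstep, hT0, zero_add]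
            have hT'nn : 0 ≤ topZ η δT δX α' := by
              rw [hT']; exact mul_nonneg (by positivity) (by omega)
            set t' := topN η δT δX α' with ht'def
            have ht'cast : (t' : ℤ) = (η:ℤ)*((q:ℤ)-1) := by
              rw [ht'def, topN, Int.toNat_of_nonneg hT'nn, hT']
            have ht'nat : t' = η * (q - 1) := by
              have : ((η * (q-1) : ℕ):ℤ) = (η:ℤ)*((q:ℤ)-1) := by push_cast [Nat.cast_sub (by omega : 1 ≤ q)]; ring
              omega
            have ht'ge : q ≤ t' := by
              have : (q:ℤ) ≤ (t':ℤ) := by rw [ht'cast]; linarith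
              exact_mod_cast this
            have hsplit : t' = (q-1) + (η-1) * (q-1) := by
              rw [ht'nat]
              have h1 : η = 1 + (η - 1) := by omega
              calc η * (q-1) = (1 + (η-1)) * (q-1) := by rw [← h1]
                _ = (q-1) + (η-1)*(q-1) := by ring
            have hpow_t' : ∀ x : F, x ^ t' = x ^ (q-1) := by
              intro x
              rw [hsplit]
              exact pow_key x (q-1) (η-1) (by omega)
            have hclaim : W F η δT δX α β =
                W F η δT δX α' t' + W F η δT δX α' 0 - W F η δT δX α' (q-1) := by
              funext i
              have hbred : ∀ x : F, x ^ α = x ^ α' := hbpow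
              rcases i with ⟨a, b⟩ | b | a | u
              · show a^β * b^α = a^t' * b^α' + a^0 * b^α' - a^(q-1) * b^α'
                rw [hβ0, hpow_t' a, hbred b]
                ring
              · show (if (β:ℤ) = topZ η δT δX α then (1:F) else 0) * b^α =
                  (if (t':ℤ) = topZ η δT δX α' then (1:F) else 0) * b^α' +
                  (if ((0:ℕ):ℤ) = topZ η δT δX α' then (1:F) else 0) * b^α' -
                  (if (((q-1:ℕ)):ℤ) = topZ η δT δX α' then (1:F) else 0) * b^α'
                rw [if_pos (by rw [hT0, hβ0]; rfl), if_pos (by rw [ht'cast, hT'])]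
                rw [if_neg (by rw [hT']; intro h; simp at h; omega),
                  if_neg (by
                    rw [hT']
                    intro h
                    have hc : ((q-1:ℕ):ℤ) = (q:ℤ)-1 := by omega
                    rw [hc] at h
                    linarith)]
                rw [hbred b]
                ring
              · show a^β * (if α = δX then (1:F) else 0) =
                  a^t' * (if α' = δX then (1:F) else 0) +
                  a^0 * (if α' = δX then (1:F) else 0) -
                  a^(q-1) * (if α' = δX then (1:F) else 0)
                rw [if_neg (by omega), if_neg (by omega)]
                ring
              · show (if (β:ℤ) = topZ η δT δX α then (1:F) else 0) *
                    (if α = δX then (1:F) else 0) = _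
                rw [if_neg (by omega : ¬ α = δX)]
                show _ * (0:F) = _ * (if α' = δX then (1:F) else 0) +
                  _ * (if α' = δX then (1:F) else 0) - _ * (if α' = δX then (1:F) else 0)
                rw [if_neg (by omega : ¬ α' = δX)]
                ring
            rw [hclaim]
            have ih1 := ihα α' hα'lt t' ⟨le_of_lt hα'δX, by
              show (t':ℤ) ≤ topZ η δT δX α'
              rw [ht'cast, hT']⟩
            have ih2 := ihα α' hα'lt 0 ⟨le_of_lt hα'δX, by
              show ((0:ℕ):ℤ) ≤ topZ η δT δX α'
              simpa using hT'nn⟩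
            have ih3 := ihα α' hα'lt (q-1) ⟨le_of_lt hα'δX, by
              show ((q-1:ℕ):ℤ) ≤ topZ η δT δX α'
              have hc : ((q-1:ℕ):ℤ) = (q:ℤ)-1 := by omega
              rw [hc, hT']
              linarith⟩
            exact Submodule.sub_mem _ (Submodule.add_mem _ ih1 ih2) ih3
          · -- β = topN α ≥ 1 : shift to the top of column α'
            have ht1 : 1 ≤ topN η δT δX α := by omega
            set β' := β + η * (q-1) with hβ'def
            have hβ'cast : ((β':ℕ):ℤ) = (β:ℤ) + (η:ℤ)*((q:ℤ)-1) := by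
              rw [hβ'def]
              push_cast [Nat.cast_sub (by omega : 1 ≤ q)]
              ring
            have hβZ : (β:ℤ) = topZ η δT δX α := by rw [hβt, htopcast]
            have heq : W F η δT δX α β = W F η δT δX α' β' := by
              apply W_congr ?_ hbpow ?_ (iff_of_false (by omega) (by omega))
              · intro x
                rw [hβ'def, hβt]
                exact (pow_key x (topN η δT δX α) η ht1).symm
              · apply iff_of_true hβZ
                rw [hβ'cast, hstep, hβZ]
            rw [heq]
            exact ihα α' hα'lt β' ⟨le_of_lt hα'δX, by
              show ((β':ℕ):ℤ) ≤ topZ η δT δX α'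
              rw [hβ'cast, hstep, hβZ]⟩
        · -- β < topN α and β < q : just shift the column
          have hβq : β < q := by
            by_contra h
            exact hβt (hred (le_of_not_gt h))
          have hβlt : β < topN η δT δX α := lt_of_le_of_ne hβleN hβt
          have heq : W F η δT δX α β = W F η δT δX α' β := by
            apply W_congr (fun x => rfl) hbpow ?_ (iff_of_false (by omega) (by omega))
            apply iff_of_false
            · omega
            · rw [hstep]
              intro h
              have : (β:ℤ) < topZ η δT δX α := by omega
              linarith
          rw [heq]
          refine ihα α' hα'lt β ⟨le_of_lt hα'δX, ?_⟩
          show (β:ℤ) ≤ topZ η δT δX α'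
          rw [hstep]
          have : (β:ℤ) ≤ topZ η δT δX α := hβtop'
          linarith

end Span

section Indep
variable {F : Type} [Field F] [Fintype F]
variable {η : ℕ} {δT : ℤ} {δX : ℕ}
local notation "q" => Fintype.card F

lemma Code_eq (hη : 2 ≤ η) (hδ : 0 ≤ δT + (η:ℤ)*(δX:ℤ)) :
    Code F η δT δX = Submodule.span F
      ((fun p : ℕ × ℕ => W F η δT δX p.1 p.2) '' ↑(KF η δT δX q)) := by
  have hq : 2 ≤ q := one_lt_q
  apply le_antisymm
  · rw [Code, Submodule.span_le, ev_image_eq]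
    rintro v ⟨α, β, hf, rfl⟩
    exact span_feas hη hδ α β hf
  · rw [Submodule.span_le]
    rintro v ⟨p, hp, rfl⟩
    apply Submodule.subset_span
    rw [ev_image_eq]
    exact ⟨p.1, p.2, KF_feas hη hδ hq (by simpa using hp), rfl⟩

lemma G_all_zero (hη : 2 ≤ η) (hδ : 0 ≤ δT + (η:ℤ)*(δX:ℤ)) (G : ℕ × ℕ → F)
    (hsum : ∑ p ∈ KF η δT δX q, G p • W F η δT δX p.1 p.2 = 0) :
    ∀ p ∈ KF η δT δX q, G p = 0 := by
  classical
  have hq : 2 ≤ q := one_lt_q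
  have hmc := mN_cast hη hδ hq
  have hco : ∀ i : HIdx F, ∑ p ∈ KF η δT δX q, G p * (W F η δT δX p.1 p.2 i) = 0 := by
    intro i
    have := congrFun hsum i
    simpa [Finset.sum_apply] using this
  -- the four families of coordinate equations
  have E1 : ∀ a b : F,
      ∑ p ∈ KF η δT δX q, G p * (a ^ p.2 * b ^ p.1) = 0 := by
    intro a b
    have := hco (Sum.inl (a, b))
    simpa [W] using this
  have E2 : ∀ b : F,
      ∑ p ∈ KF η δT δX q,
        G p * ((if (p.2:ℤ) = topZ η δT δX p.1 then (1:F) else 0) * b ^ p.1) = 0 := by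
    intro b
    have := hco (Sum.inr (Sum.inl b))
    simp [W, topZ] at this
    rw [← this]
    apply Finset.sum_congr rfl
    intro p _
    split_ifs <;> simp_all [topZ]
  have E3 : ∀ a : F,
      ∑ p ∈ KF η δT δX q,
        G p * (a ^ p.2 * (if p.1 = δX then (1:F) else 0)) = 0 := by
    intro a
    have := hco (Sum.inr (Sum.inr (Sum.inl a)))
    simpa [W] using this
  have E4 : ∑ p ∈ KF η δT δX q,
      G p * ((if (p.2:ℤ) = topZ η δT δX p.1 then (1:F) else 0) *
        (if p.1 = δX then (1:F) else 0)) = 0 := by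
    have := hco (Sum.inr (Sum.inr (Sum.inr ())))
    simp [W, topZ] at this
    rw [← this]
    apply Finset.sum_congr rfl
    intro p _
    split_ifs <;> simp_all [topZ]
  -- the filter at δX
  have hfilter : (KF η δT δX q).filter (fun p => p.1 = δX) =
      (if 0 ≤ δT then ({δX} ×ˢ rowK η δT δX q δX) else ∅) := by
    ext p
    rw [Finset.mem_filter]
    by_cases h0 : 0 ≤ δT
    · rw [if_pos h0, Finset.mem_product, Finset.mem_singleton]
      constructor
      · rintro ⟨hp, h1⟩
        exact ⟨h1, (KF_fst_δX hη hδ hq hp h1).2⟩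
      · rintro ⟨h1, h2⟩
        refine ⟨?_, h1⟩
        rw [mem_KF]
        by_cases hqX : q ≤ δX
        · right; exact ⟨h0, hqX, h1, h2⟩
        · left
          have hA : Afloor η δT δX = (δX:ℤ) := by simp [Afloor, h0]
          have : (mN η δT δX q : ℤ) = (δX:ℤ) := by rw [hmc, hA]; omega
          refine ⟨by omega, ?_⟩
          rw [h1]
          exact h2
    · rw [if_neg h0]
      simp only [Finset.notMem_empty, iff_false]
      rintro ⟨hp, h1⟩
      exact h0 (KF_fst_δX hη hδ hq hp h1).1
  have htZδX : topZ η δT δX δX = δT := by rw [topZ]; ring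
  -- Step 1 : kill the rows with first coordinate δX
  have hstep1 : ∀ β : ℕ, (δX, β) ∈ KF η δT δX q → G (δX, β) = 0 := by
    intro β hp
    obtain ⟨h0, hrow⟩ := KF_fst_δX hη hδ hq hp rfl
    have htXc : (topN η δT δX δX : ℤ) = δT := by
      rw [topN, htZδX, Int.toNat_of_nonneg h0]
    -- top coefficient via E4
    have h4 : G (δX, topN η δT δX δX) = 0 := by
      have e := E4
      rw [← Finset.sum_filter_of_ne (p := fun p => p.1 = δX)] at e
      rotate_left
      · intro p _ hne
        by_contra h
        exact hne (by rw [if_neg h, mul_zero, mul_zero])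
      rw [hfilter, if_pos h0, Finset.sum_product, Finset.sum_singleton] at e
      rw [Finset.sum_eq_single_of_mem (topN η δT δX δX) (topN_mem_rowK)] at e
      · simpa [htXc, htZδX] using e
      · intro b _ hbne
        have hne : ¬ ((b:ℤ) = topZ η δT δX δX) := by
          rw [htZδX]; intro h; exact hbne (by omega)
        simp only [if_neg hne, zero_mul, mul_zero]
    -- the rest of the row via E3
    have hrest : ∀ β' ∈ Finset.range (min (topN η δT δX δX) q), G (δX, β') = 0 := by
      apply uni_ind (F := F) _ _ (by intro n hn; simp at hn; omega)
      intro a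
      have e := E3 a
      rw [← Finset.sum_filter_of_ne (p := fun p => p.1 = δX)] at e
      rotate_left
      · intro p _ hne
        by_contra h
        exact hne (by rw [if_neg h, mul_zero, mul_zero])
      rw [hfilter, if_pos h0, Finset.sum_product, Finset.sum_singleton] at e
      simp only [eq_self_iff_true, if_true, mul_one] at e
      rw [rowK, Finset.sum_union (by rw [Finset.disjoint_singleton_right, Finset.mem_range]; omega),
        Finset.sum_singleton] at e
      rw [h4, zero_mul, add_zero] at e
      rw [← e]
    have hrow' : β ∈ rowK η δT δX q δX := hrow
    rw [mem_rowK] at hrow'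
    rcases hrow' with h | h
    · exact hrest β (Finset.mem_range.mpr h)
    · rw [h]; exact h4
  -- Step 2 : kill the top elements of the columns
  have hstep2 : ∀ α : ℕ, α ≤ mN η δT δX q → G (α, topN η δT δX α) = 0 := by
    have key : ∀ b : F,
        ∑ α ∈ Finset.range (mN η δT δX q + 1), G (α, topN η δT δX α) * b ^ α = 0 := by
      intro b
      have e := E2 b
      rw [KF, Finset.sum_union] at e
      rotate_left
      · rw [Finset.disjoint_left]
        intro p hp1 hp2
        rw [mem_KF1] at hp1
        rw [mem_KF2] at hp2
        have := mN_le hη hδ hq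
        omega
      have h2zero : ∑ p ∈ KF2 η δT δX q,
          G p * ((if (p.2:ℤ) = topZ η δT δX p.1 then (1:F) else 0) * b ^ p.1) = 0 := by
        apply Finset.sum_eq_zero
        intro p hp
        have h1 := (mem_KF2.mp hp).2.2.1
        have hpK : p ∈ KF η δT δX q := Finset.mem_union_right _ hp
        have : G p = 0 := by
          have : p = (δX, p.2) := by rw [← h1]
          rw [this] at hpK ⊢
          exact hstep1 p.2 hpK
        rw [this, zero_mul]
      rw [h2zero, add_zero, KF1, Finset.sum_biUnion] at e
      rotate_left
      · intro x _ y _ hxy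
        simp only [Function.onFun]
        rw [Finset.disjoint_left]
        intro p hp1 hp2
        simp only [Finset.mem_product, Finset.mem_singleton] at hp1 hp2
        exact hxy (hp1.1 ▸ hp2.1.symm ▸ rfl)
      rw [← e]
      apply Finset.sum_congr rfl
      intro α hα
      rw [Finset.mem_range] at hα
      have hαA : (α:ℤ) ≤ Afloor η δT δX := by omega
      have htc := topN_cast hη hδ hαA
      rw [Finset.sum_product, Finset.sum_singleton]
      rw [Finset.sum_eq_single_of_mem (topN η δT δX α) (topN_mem_rowK)]
      · rw [if_pos (show ((topN η δT δX α : ℕ):ℤ) = topZ η δT δX α from htc), one_mul]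
      · intro b' _ hbne
        have hne : ¬ ((b':ℤ) = topZ η δT δX α) := by
          rw [← htc]; intro h; exact hbne (by omega)
        rw [if_neg hne, zero_mul, mul_zero]
    intro α hα
    have := uni_ind (F := F) (Finset.range (mN η δT δX q + 1))
      (fun α => G (α, topN η δT δX α))
      (by intro n hn; rw [Finset.mem_range] at hn; have := mN_le hη hδ hq; omega)
      key α (Finset.mem_range.mpr (by omega))
    exact this
  -- elements with a large coordinate are already dead
  have hbig : ∀ p ∈ KF η δT δX q, ¬(p.1 < q ∧ p.2 < q) → G p = 0 := by
    intro p hp hnb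
    have hpc : p = (p.1, p.2) := rfl
    rcases mem_KF.mp hp with ⟨h1, h2⟩ | ⟨h0, hqX, h1, h2⟩
    · have hmle := mN_le hη hδ hq
      have hp1 : p.1 < q := by omega
      have hp2 : q ≤ p.2 := by omega
      rw [mem_rowK] at h2
      have : p.2 = topN η δT δX p.1 := by omega
      rw [hpc, this]
      exact hstep2 p.1 h1
    · have hGoal : (δX, p.2) = p := by rw [← h1]
      have hz : G (δX, p.2) = 0 := hstep1 p.2 (by rw [hGoal]; exact hp)
      rw [← hGoal]
      exact hz
  -- small elements via bivariate independence
  have hsmall : ∀ p ∈ KF η δT δX q, p.1 < q → p.2 < q → G p = 0 := by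
    set c : ℕ → ℕ → F := fun α β =>
      if (α, β) ∈ KF η δT δX q ∧ α < q ∧ β < q then G (α, β) else 0 with hc
    have hKsub : (KF η δT δX q).filter (fun p => p.1 < q ∧ p.2 < q) ⊆
        Finset.range q ×ˢ Finset.range q := by
      intro p hp
      rw [Finset.mem_filter] at hp
      rw [Finset.mem_product, Finset.mem_range, Finset.mem_range]
      exact hp.2
    have hbi : ∀ a b : F,
        ∑ β ∈ Finset.range q, ∑ α ∈ Finset.range q, c α β * a ^ β * b ^ α = 0 := by
      intro a b
      rw [Finset.sum_comm]
      have lhs : ∑ α ∈ Finset.range q, ∑ β ∈ Finset.range q, c α β * a ^ β * b ^ α =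
          ∑ p ∈ Finset.range q ×ˢ Finset.range q, c p.1 p.2 * a ^ p.2 * b ^ p.1 := by
        rw [Finset.sum_product]
      rw [lhs]
      rw [← Finset.sum_subset hKsub] 
      rotate_left
      · intro p hpD hpn
        have : ¬((p.1, p.2) ∈ KF η δT δX q ∧ p.1 < q ∧ p.2 < q) := by
          intro hcon
          apply hpn
          rw [Finset.mem_filter]
          exact ⟨hcon.1, hcon.2⟩
        rw [hc]
        simp only
        rw [if_neg this, zero_mul, zero_mul]
      have e := E1 a b
      rw [← Finset.sum_filter_of_ne (p := fun p => p.1 < q ∧ p.2 < q)] at e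
      rotate_left
      · intro p hp hne
        by_contra h
        exact hne (by rw [hbig p hp h, zero_mul])
      rw [← e]
      apply Finset.sum_congr rfl
      intro p hp
      rw [Finset.mem_filter] at hp
      rw [hc]
      simp only
      rw [if_pos ⟨hp.1, hp.2⟩]
      ring
    intro p hp h1 h2
    have := bi_ind c hbi p.1 p.2 h1 h2
    rw [hc] at this
    simp only at this
    rwa [if_pos ⟨hp, h1, h2⟩] at this
  intro p hp
  by_cases h : p.1 < q ∧ p.2 < q
  · exact hsmall p hp h.1 h.2
  · exact hbig p hp h

lemma KF_indep (hη : 2 ≤ η) (hδ : 0 ≤ δT + (η:ℤ)*(δX:ℤ)) :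
    LinearIndependent F
      (fun p : (KF η δT δX q : Finset (ℕ × ℕ)) => W F η δT δX p.1.1 p.1.2) := by
  classical
  rw [Fintype.linearIndependent_iff]
  intro g hg i
  set G : ℕ × ℕ → F := fun p => if h : p ∈ KF η δT δX q then g ⟨p, h⟩ else 0 with hG
  have hsum : ∑ p ∈ KF η δT δX q, G p • W F η δT δX p.1 p.2 = 0 := by
    rw [← Finset.sum_coe_sort (KF η δT δX q) (fun p => G p • W F η δT δX p.1 p.2)]
    rw [← hg]
    apply Finset.sum_congr rfl
    intro x _
    have hx : G x.1 = g x := by rw [hG]; simp only; rw [dif_pos x.2]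
    rw [hx]
  have := G_all_zero hη hδ G hsum i.1 i.2
  rw [hG] at this
  simp only at this
  rwa [dif_pos i.2] at this

lemma finrank_Code (hη : 2 ≤ η) (hδ : 0 ≤ δT + (η:ℤ)*(δX:ℤ)) :
    Module.finrank F (Code F η δT δX) = (KF η δT δX q).card := by
  have hind := KF_indep (F := F) (η := η) (δT := δT) (δX := δX) hη hδ
  have h := finrank_span_eq_card hind
  rw [Fintype.card_coe] at h
  rw [Code_eq hη hδ]
  rw [show ((fun p : ℕ × ℕ => W F η δT δX p.1 p.2) '' ↑(KF η δT δX q)) =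
      Set.range (fun p : (KF η δT δX q : Finset (ℕ × ℕ)) => W F η δT δX p.1.1 p.1.2) from by
    rw [Set.image_eq_range]
    rfl]
  exact h

end Indep

lemma gauss_q (n : ℕ) : (∑ i ∈ Finset.range n, (i:ℚ)) = (n:ℚ)*((n:ℚ)-1)/2 := by
  induction n with
  | zero => simp
  | succ n ih =>
    rw [Finset.sum_range_succ, ih]
    push_cast
    ring

/-- the explicit dimension formula for `C_η(δT,δX)` when `η ≥ 2`. -/
theorem statement8 (η : ℕ) (δT : ℤ) (δX : ℕ) (hη : 2 ≤ η)
    (hδ : 0 ≤ δT + (η : ℤ) * (δX : ℤ)) :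
    let q : ℤ := (Fintype.card F : ℤ)
    let δ : ℤ := δT + (η : ℤ) * (δX : ℤ)
    let m : ℤ := min (Afloor η δT δX) (q - 1)
    let h : ℤ := if 0 ≤ δT ∧ Fintype.card F ≤ δX then min δT q + 1 else 0
    let s : ℚ := ((δ - q : ℤ) : ℚ) / (η : ℚ)
    let st : ℤ := if s < 0 then -1 else if (m : ℚ) < s then m else ⌊s⌋
    (Module.finrank F (Code F η δT δX) : ℚ) =
      ((q : ℚ) + 1) * ((st : ℚ) + 1) + ((m : ℚ) - st) * ((δ : ℚ) + 1)
        - (η : ℚ) * ((m : ℚ) * (m + 1) - (st : ℚ) * (st + 1)) / 2 + (h : ℚ) := by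
  intro q δ m h s st
  have hqd : q = (Fintype.card F : ℤ) := rfl
  have hδd : δ = δT + (η : ℤ) * (δX : ℤ) := rfl
  have hmd : m = min (Afloor η δT δX) (q - 1) := rfl
  have hhd : h = if 0 ≤ δT ∧ Fintype.card F ≤ δX then min δT q + 1 else 0 := rfl
  have hsd : s = ((δ - q : ℤ) : ℚ) / (η : ℚ) := rfl
  have hstd : st = if s < 0 then -1 else if (m : ℚ) < s then m else ⌊s⌋ := rfl
  clear_value q δ m h s st
  have hQ2 : 2 ≤ Fintype.card F := one_lt_q
  have hq2 : (2:ℤ) ≤ q := by rw [hqd]; exact_mod_cast hQ2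
  have hηq : (0:ℚ) < (η:ℚ) := by positivity
  have hAfl0 := Afloor_nonneg (δT := δT) (δX := δX) hη hδ
  have hm0 : 0 ≤ m := by rw [hmd]; omega
  have hst_low : -1 ≤ st := by
    rw [hstd]; split_ifs with h1 h2
    · exact le_rfl
    · omega
    · have : (0:ℤ) ≤ ⌊s⌋ := Int.floor_nonneg.mpr (le_of_not_gt h1)
      omega
  have hst_hi : st ≤ m := by
    rw [hstd]; split_ifs with h1 h2
    · omega
    · exact le_rfl
    · have h3 : s ≤ (m:ℚ) := le_of_not_gt h2
      have h4 := Int.floor_le_floor h3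
      rwa [Int.floor_intCast] at h4
  have hITE : ((if 0 ≤ δT ∧ Fintype.card F ≤ δX then
      min (topN η δT δX δX) (Fintype.card F) + 1 else 0 : ℕ) : ℚ) = (h:ℚ) := by
    rw [hhd]
    by_cases hc : 0 ≤ δT ∧ Fintype.card F ≤ δX
    · rw [if_pos hc, if_pos hc]
      have htX : (topN η δT δX δX : ℤ) = δT := by
        rw [topN]
        have hz : topZ η δT δX δX = δT := by rw [topZ]; ring
        rw [hz, Int.toNat_of_nonneg hc.1]
      have hmin : ((min (topN η δT δX δX) (Fintype.card F) : ℕ) : ℤ) = min δT q := by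
        rw [Nat.cast_min, htX, hqd]
      have : ((min (topN η δT δX δX) (Fintype.card F) + 1 : ℕ) : ℚ)
          = (((min (topN η δT δX δX) (Fintype.card F) : ℕ) : ℤ) : ℚ) + 1 := by
        push_cast; ring
      rw [this, hmin]
      push_cast
      ring
    · rw [if_neg hc, if_neg hc]; simp
  rw [finrank_Code hη hδ, KF_card hη hδ hQ2, Nat.cast_add, hITE]
  set M := mN η δT δX (Fintype.card F) with hMd
  have hmc : (M:ℤ) = m := by rw [hMd, mN_cast hη hδ hQ2, hmd, hqd]
  set T := (st+1).toNat with hTd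
  have hTz : (T:ℤ) = st + 1 := Int.toNat_of_nonneg (by omega)
  have hTM : T ≤ M + 1 := by omega
  have hA : ∀ α : ℕ, (α:ℤ) ≤ st → (q:ℤ) ≤ topZ η δT δX α := by
    intro α hα
    have hαs : (α:ℚ) ≤ s := by
      rw [hstd] at hα
      split_ifs at hα with h1 h2
      · exfalso; omega
      · have h3 : (α:ℚ) ≤ (m:ℚ) := by exact_mod_cast hα
        linarith [h2]
      · have h5 := Int.le_floor.mp hα
        exact_mod_cast h5
    rw [hsd, le_div_iff₀ hηq] at hαs
    have h4 : (α:ℤ) * (η:ℤ) ≤ δ - q := by exact_mod_cast hαs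
    rw [hδd] at h4
    show (q:ℤ) ≤ δT + (η:ℤ)*(δX:ℤ) - (η:ℤ)*(α:ℤ)
    linarith
  have hB : ∀ α : ℕ, α ≤ M → st < (α:ℤ) → topZ η δT δX α ≤ (q:ℤ) := by
    intro α hαM hα
    have hsα : s ≤ (α:ℚ) := by
      rw [hstd] at hα
      split_ifs at hα with h1 h2
      · have : (0:ℚ) ≤ (α:ℚ) := by positivity
        linarith
      · exfalso
        have : (α:ℤ) ≤ m := by omega
        omega
      · have h5 := Int.lt_floor_add_one s
        have h6 : ((⌊s⌋:ℤ):ℚ) + 1 ≤ (α:ℚ) := by exact_mod_cast hα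
        linarith
    rw [hsd, div_le_iff₀ hηq] at hsα
    have h4 : δ - q ≤ (α:ℤ) * (η:ℤ) := by exact_mod_cast hsα
    rw [hδd] at h4
    show δT + (η:ℤ)*(δX:ℤ) - (η:ℤ)*(α:ℤ) ≤ (q:ℤ)
    linarith
  have main : ((∑ α ∈ Finset.range (M+1),
      (min (topN η δT δX α) (Fintype.card F) + 1) : ℕ) : ℚ)
      = ((q:ℚ)+1)*((st:ℚ)+1) + ((m:ℚ)-(st:ℚ))*((δ:ℚ)+1)
        - (η:ℚ)*((m:ℚ)*((m:ℚ)+1) - (st:ℚ)*((st:ℚ)+1))/2 := by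
    rw [Nat.cast_sum]
    rw [Finset.range_eq_Ico,
      ← Finset.sum_Ico_consecutive (fun α =>
        ((min (topN η δT δX α) (Fintype.card F) + 1 : ℕ) : ℚ)) (Nat.zero_le T) hTM]
    have part1 : ∑ α ∈ Finset.Ico 0 T,
        ((min (topN η δT δX α) (Fintype.card F) + 1 : ℕ) : ℚ) = (T:ℚ)*((q:ℚ)+1) := by
      have e : ∀ α ∈ Finset.Ico 0 T,
          ((min (topN η δT δX α) (Fintype.card F) + 1 : ℕ) : ℚ) = (q:ℚ)+1 := by
        intro α hα
        rw [Finset.mem_Ico] at hα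
        have hαst : (α:ℤ) ≤ st := by omega
        have h1 := hA α hαst
        have h0top : 0 ≤ topZ η δT δX α := by omega
        have htc : (topN η δT δX α : ℤ) = topZ η δT δX α := Int.toNat_of_nonneg h0top
        have hminq : Fintype.card F ≤ topN η δT δX α := by rw [hqd] at h1; omega
        rw [min_eq_right hminq, hqd]
        push_cast
        ring
      rw [Finset.sum_congr rfl e, Finset.sum_const, Nat.card_Ico, Nat.sub_zero, nsmul_eq_mul]
    have part2 : ∑ α ∈ Finset.Ico T (M+1),
        ((min (topN η δT δX α) (Fintype.card F) + 1 : ℕ) : ℚ)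
        = ((M:ℚ)+1-(T:ℚ))*((δ:ℚ)+1)
          - (η:ℚ)*(((M:ℚ)+1)*(M:ℚ)/2 - (T:ℚ)*((T:ℚ)-1)/2) := by
      have e : ∀ α ∈ Finset.Ico T (M+1),
          ((min (topN η δT δX α) (Fintype.card F) + 1 : ℕ) : ℚ)
            = (((δ:ℚ)+1) - (η:ℚ)*(α:ℚ)) := by
        intro α hα
        rw [Finset.mem_Ico] at hα
        have hαst : st < (α:ℤ) := by omega
        have hαM : α ≤ M := by omega
        have hαA : (α:ℤ) ≤ Afloor η δT δX := by
          have : (α:ℤ) ≤ m := by omega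
          rw [hmd] at this
          omega
        have h0top : 0 ≤ topZ η δT δX α := topZ_nonneg hη hδ hαA
        have htc : (topN η δT δX α : ℤ) = topZ η δT δX α := Int.toNat_of_nonneg h0top
        have h1 := hB α hαM hαst
        have hle : topN η δT δX α ≤ Fintype.card F := by rw [hqd] at h1; omega
        rw [min_eq_left hle]
        have hv : ((topN η δT δX α : ℕ):ℤ) = δ - (η:ℤ)*(α:ℤ) := by
          rw [htc, topZ, hδd]
        calc ((topN η δT δX α + 1 : ℕ) : ℚ)
            = (((topN η δT δX α : ℕ):ℤ):ℚ) + 1 := by push_cast; ring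
          _ = ((δ - (η:ℤ)*(α:ℤ) : ℤ):ℚ) + 1 := by rw [hv]
          _ = ((δ:ℚ)+1) - (η:ℚ)*(α:ℚ) := by push_cast; ring
      rw [Finset.sum_congr rfl e, Finset.sum_sub_distrib, Finset.sum_const, Nat.card_Ico,
        nsmul_eq_mul, ← Finset.mul_sum, Finset.sum_Ico_eq_sub _ hTM, gauss_q, gauss_q,
        Nat.cast_sub hTM]
      push_cast
      ring
    rw [part1, part2]
    have hTQ : (T:ℚ) = (st:ℚ) + 1 := by exact_mod_cast hTz
    have hMQ : (M:ℚ) = (m:ℚ) := by exact_mod_cast hmc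
    rw [hTQ, hMQ]
    ring
  rw [main]

end Hirz
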